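/- For symmetric nonnegative matrices A' (n×n) and A'' (m×m), st₊(A' ⊕ A'') = st₊(A') + st₊(A''), where A' ⊕ A'' is the block diagonal direct sum. -/

import Mathlib

open Matrix

noncomputable def sntRank {m : Type*} [Fintype m] (A : Matrix m m ℝ) : ℕ :=
  sInf {k : ℕ | ∃ B : Matrix m (Fin k) ℝ, ∃ C : Matrix (Fin k) (Fin k) ℝ,
    (∀ i j, 0 ≤ B i j) ∧ (∀ i j, 0 ≤ C i j) ∧ C.IsSymm ∧ A = B * C * Bᵀ}

lemma snt_card_mem {μ : Type*} [Fintype μ] (A : Matrix μ μ ℝ) {ι : Type*} [Fintype ι]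
    (B : Matrix μ ι ℝ) (C : Matrix ι ι ℝ)
    (hB : ∀ i j, 0 ≤ B i j) (hC : ∀ i j, 0 ≤ C i j) (hCs : C.IsSymm)
    (hA : A = B * C * Bᵀ) :
    Fintype.card ι ∈ {k : ℕ | ∃ B : Matrix μ (Fin k) ℝ, ∃ C : Matrix (Fin k) (Fin k) ℝ,
      (∀ i j, 0 ≤ B i j) ∧ (∀ i j, 0 ≤ C i j) ∧ C.IsSymm ∧ A = B * C * Bᵀ} := by
  set e := Fintype.equivFin ι
  refine ⟨B.submatrix id e.symm, C.submatrix e.symm e.symm, fun i j => hB _ _,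
    fun i j => hC _ _, ?_, ?_⟩
  · ext i j
    simp [Matrix.transpose_apply, hCs.apply]
  · rw [Matrix.transpose_submatrix]
    rw [Matrix.submatrix_mul_equiv B C id e.symm e.symm,
      Matrix.submatrix_mul_equiv (B * C) Bᵀ id e.symm id]
    simpa using hA

lemma snt_nonempty {μ : Type*} [Fintype μ] [DecidableEq μ] (A : Matrix μ μ ℝ)
    (hA : A.IsSymm) (hApos : ∀ i j, 0 ≤ A i j) :
    {k : ℕ | ∃ B : Matrix μ (Fin k) ℝ, ∃ C : Matrix (Fin k) (Fin k) ℝ,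
      (∀ i j, 0 ≤ B i j) ∧ (∀ i j, 0 ≤ C i j) ∧ C.IsSymm ∧ A = B * C * Bᵀ}.Nonempty := by
  refine ⟨Fintype.card μ, snt_card_mem A 1 A ?_ hApos hA ?_⟩
  · intro i j
    by_cases h : i = j <;> simp [Matrix.one_apply, h]
  · simp [Matrix.transpose_one]

set_option maxHeartbeats 1000000 in
theorem stmt_7 {n m : ℕ} (A' : Matrix (Fin n) (Fin n) ℝ) (A'' : Matrix (Fin m) (Fin m) ℝ)
    (hA' : A'.IsSymm) (hA'pos : ∀ i j, 0 ≤ A' i j)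
    (hA'' : A''.IsSymm) (hA''pos : ∀ i j, 0 ≤ A'' i j) :
    sntRank (Matrix.fromBlocks A' 0 0 A'') = sntRank A' + sntRank A'' := by
  classical
  have hSym : (Matrix.fromBlocks A' 0 0 A'').IsSymm := by
    rw [Matrix.IsSymm, Matrix.fromBlocks_transpose]
    rw [Matrix.IsSymm] at hA' hA''
    simp [hA', hA'']
  have hPos : ∀ i j, 0 ≤ (Matrix.fromBlocks A' 0 0 A'') i j := by
    rintro (i | i) (j | j) <;> simp [Matrix.fromBlocks, hA'pos, hA''pos]
  -- upper bound: sntRank (⊕) ≤ sntRank A' + sntRank A''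
  obtain ⟨B', C', hB', hC', hCs', hEq'⟩ := Nat.sInf_mem (snt_nonempty A' hA' hA'pos)
  obtain ⟨B'', C'', hB'', hC'', hCs'', hEq''⟩ := Nat.sInf_mem (snt_nonempty A'' hA'' hA''pos)
  have hub : sntRank (Matrix.fromBlocks A' 0 0 A'') ≤ sntRank A' + sntRank A'' := by
    have hmem := snt_card_mem (Matrix.fromBlocks A' 0 0 A'')
      (Matrix.fromBlocks B' 0 0 B'') (Matrix.fromBlocks C' 0 0 C'')
      (by rintro (i | i) (j | j) <;> simp [Matrix.fromBlocks, hB', hB''])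
      (by rintro (i | i) (j | j) <;> simp [Matrix.fromBlocks, hC', hC''])
      (by rw [Matrix.IsSymm, Matrix.fromBlocks_transpose]
          rw [Matrix.IsSymm] at hCs' hCs''
          simp [hCs', hCs''])
      (by rw [Matrix.fromBlocks_transpose, Matrix.fromBlocks_multiply,
            Matrix.fromBlocks_multiply]
          simp [← hEq', ← hEq''])
    have := Nat.sInf_le hmem
    simpa [sntRank] using this
  -- lower bound
  set k := sntRank (Matrix.fromBlocks A' 0 0 A'') with hk
  obtain ⟨B, C, hB, hC, hCs, hEq⟩ := Nat.sInf_mem (snt_nonempty _ hSym hPos)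
  -- entry formula
  have entry : ∀ x y, (Matrix.fromBlocks A' 0 0 A'') x y
      = ∑ q : Fin k, ∑ p : Fin k, B x p * C p q * B y q := by
    intro x y
    rw [hEq, Matrix.mul_apply]
    refine Finset.sum_congr rfl fun q _ => ?_
    rw [Matrix.mul_apply, Finset.sum_mul]
    simp only [Matrix.transpose_apply]
    rfl
  have cross : ∀ i j p q, B (Sum.inl i) p * C p q * B (Sum.inr j) q = 0 := by
    intro i j p q
    have h0 : ∑ q : Fin k, ∑ p : Fin k,
        B (Sum.inl i) p * C p q * B (Sum.inr j) q = 0 := by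
      rw [← entry]
      simp [Matrix.fromBlocks]
    have hnn : ∀ q' ∈ Finset.univ, (0:ℝ) ≤ ∑ p : Fin k,
        B (Sum.inl i) p * C p q' * B (Sum.inr j) q' :=
      fun q' _ => Finset.sum_nonneg fun p _ =>
        mul_nonneg (mul_nonneg (hB _ _) (hC _ _)) (hB _ _)
    have h1 := (Finset.sum_eq_zero_iff_of_nonneg hnn).mp h0 q (Finset.mem_univ q)
    exact (Finset.sum_eq_zero_iff_of_nonneg
      (fun p _ => mul_nonneg (mul_nonneg (hB _ _) (hC _ _)) (hB _ _))).mp h1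
      p (Finset.mem_univ p)
  have hCsym : ∀ p q, C p q = C q p := fun p q => (hCs.apply q p)
  set S₁ : Finset (Fin k) := Finset.univ.filter
    (fun p => ∃ i q i', B (Sum.inl i) p ≠ 0 ∧ C p q ≠ 0 ∧ B (Sum.inl i') q ≠ 0) with hS₁
  set S₂ : Finset (Fin k) := Finset.univ.filter
    (fun p => ∃ i q i', B (Sum.inr i) p ≠ 0 ∧ C p q ≠ 0 ∧ B (Sum.inr i') q ≠ 0) with hS₂
  have memS₁ : ∀ p, p ∈ S₁ ↔
      ∃ i q i', B (Sum.inl i) p ≠ 0 ∧ C p q ≠ 0 ∧ B (Sum.inl i') q ≠ 0 := by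
    intro p; simp [hS₁]
  have memS₂ : ∀ p, p ∈ S₂ ↔
      ∃ i q i', B (Sum.inr i) p ≠ 0 ∧ C p q ≠ 0 ∧ B (Sum.inr i') q ≠ 0 := by
    intro p; simp [hS₂]
  have hdisj : Disjoint S₁ S₂ := by
    rw [Finset.disjoint_left]
    intro p hp1 hp2
    obtain ⟨i, q, i', hb1, hc1, hb2⟩ := (memS₁ p).mp hp1
    obtain ⟨j, r, j', hb3, hc2, hb4⟩ := (memS₂ p).mp hp2
    have := cross i' j q p
    have hcqp : C q p ≠ 0 := by rw [hCsym q p]; exact hc1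
    exact (mul_ne_zero (mul_ne_zero hb2 hcqp) hb3) this
  -- restriction lemmas
  have restrict : ∀ (ν : ℕ) (f : Fin ν → Fin n ⊕ Fin m) (Aν : Matrix (Fin ν) (Fin ν) ℝ)
      (S : Finset (Fin k))
      (hAν : ∀ i i', Aν i i' = (Matrix.fromBlocks A' 0 0 A'') (f i) (f i'))
      (hmemS : ∀ p, p ∈ S ↔
        ∃ i q i', B (f i) p ≠ 0 ∧ C p q ≠ 0 ∧ B (f i') q ≠ 0),
      Aν = (B.submatrix f (Subtype.val : {p // p ∈ S} → Fin k))
        * (C.submatrix (Subtype.val : {p // p ∈ S} → Fin k) (Subtype.val : {p // p ∈ S} → Fin k))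
        * (B.submatrix f (Subtype.val : {p // p ∈ S} → Fin k))ᵀ := by
    intro ν f Aν S hAν hmemS
    ext i i'
    rw [hAν, entry]
    rw [Matrix.mul_apply]
    have rhs : ∀ (q : {p // p ∈ S}),
        (B.submatrix f (Subtype.val : {p // p ∈ S} → Fin k) * C.submatrix (Subtype.val : {p // p ∈ S} → Fin k) (Subtype.val : {p // p ∈ S} → Fin k)) i q
          * (B.submatrix f Subtype.val)ᵀ q i'
        = ∑ p : {p // p ∈ S}, B (f i) p.1 * C p.1 q.1 * B (f i') q.1 := by
      intro q
      rw [Matrix.mul_apply, Finset.sum_mul]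
      simp [Matrix.submatrix_apply, Matrix.transpose_apply]
      rfl
    refine Eq.trans ?_ (Finset.sum_congr rfl fun q _ => (rhs q).symm)
    -- now reduce the full double sum to the double sum over S
    have inner : ∀ q : Fin k, q ∈ S →
        ∑ p : Fin k, B (f i) p * C p q * B (f i') q
          = ∑ p ∈ S, B (f i) p * C p q * B (f i') q := by
      intro q _
      refine (Finset.sum_subset (Finset.subset_univ S) ?_).symm
      intro p _ hpS
      by_contra hne
      have hb1 : B (f i) p ≠ 0 := fun h => hne (by simp [h])
      have hc : C p q ≠ 0 := fun h => hne (by simp [h])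
      have hb2 : B (f i') q ≠ 0 := fun h => hne (by simp [h])
      exact hpS ((hmemS p).mpr ⟨i, q, i', hb1, hc, hb2⟩)
    have outer : ∑ q : Fin k, ∑ p : Fin k, B (f i) p * C p q * B (f i') q
        = ∑ q ∈ S, ∑ p ∈ S, B (f i) p * C p q * B (f i') q := by
      rw [← Finset.sum_subset (Finset.subset_univ S) ?_]
      · exact Finset.sum_congr rfl inner
      · intro q _ hqS
        refine Finset.sum_eq_zero fun p _ => ?_
        by_contra hne
        have hb1 : B (f i) p ≠ 0 := fun h => hne (by simp [h])
        have hc : C p q ≠ 0 := fun h => hne (by simp [h])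
        have hb2 : B (f i') q ≠ 0 := fun h => hne (by simp [h])
        have hcq : C q p ≠ 0 := by rw [hCsym q p]; exact hc
        exact hqS ((hmemS q).mpr ⟨i', p, i, hb2, hcq, hb1⟩)
    rw [outer]
    rw [← Finset.sum_coe_sort S]
    refine Finset.sum_congr rfl fun q _ => ?_
    rw [← Finset.sum_coe_sort S]
  have hA'dec := restrict n Sum.inl A' S₁ (by intro i i'; simp [Matrix.fromBlocks]) memS₁
  have hA''dec := restrict m Sum.inr A'' S₂ (by intro i i'; simp [Matrix.fromBlocks]) memS₂
  have h1 : sntRank A' ≤ S₁.card := by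
    have hmem := snt_card_mem A' _ _
      (fun i j => hB _ _) (fun i j => hC _ _)
      (by ext i j; exact hCsym _ _) hA'dec
    have := Nat.sInf_le hmem
    simpa [sntRank, Fintype.card_coe] using this
  have h2 : sntRank A'' ≤ S₂.card := by
    have hmem := snt_card_mem A'' _ _
      (fun i j => hB _ _) (fun i j => hC _ _)
      (by ext i j; exact hCsym _ _) hA''dec
    have := Nat.sInf_le hmem
    simpa [sntRank, Fintype.card_coe] using this
  have hcard : S₁.card + S₂.card ≤ k := by
    rw [← Finset.card_union_of_disjoint hdisj]
    simpa using (Finset.card_le_univ (S₁ ∪ S₂))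
  omega
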